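/- arXiv:2501.16340 — 5 statements merged into one kernel-verified Lean document; each statement's English description precedes it below -/
import Mathlib

section
/- (Generalized Cauchy–Schwarz for Gram determinants) For any vectors a₁,…,aₙ, b₁,…,bₙ in a real inner product space, (det(⟨aᵢ, bⱼ⟩))² ≤ det(⟨aᵢ, aⱼ⟩) · det(⟨bᵢ, bⱼ⟩). -/
open Matrix Finset

variable {n m : ℕ}

noncomputable def Dmat (M : Matrix (Fin n) (Fin m) ℝ) (f : Fin n → Fin m) : ℝ :=
  (Matrix.of fun i j => M j (f i)).det

lemma Dmat_comp (M : Matrix (Fin n) (Fin m) ℝ) (f : Fin n → Fin m) (σ : Equiv.Perm (Fin n)) :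
    Dmat M (f ∘ σ) = (Equiv.Perm.sign σ : ℝ) * Dmat M f := by
  unfold Dmat
  have h := (Matrix.detRowAlternating : (Fin n → ℝ) [⋀^Fin n]→ₗ[ℝ] ℝ).map_perm
    (fun i j => M j (f i)) σ
  simp [Units.smul_def, zsmul_eq_mul] at h
  exact h

lemma det_mul_transpose_expand (A B : Matrix (Fin n) (Fin m) ℝ) :
    (A * Bᵀ).det = ∑ f : Fin n → Fin m, (∏ i, A i (f i)) * Dmat B f := by
  have h1 : (A * Bᵀ).det =
      (Matrix.detRowAlternating : (Fin n → ℝ) [⋀^Fin n]→ₗ[ℝ] ℝ).toMultilinearMap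
        (fun i => ∑ k, A i k • fun j => B j k) := by
    congr 1
    ext i j
    simp [Matrix.mul_apply, Finset.sum_apply, mul_comm]
  rw [h1, MultilinearMap.map_sum]
  refine Finset.sum_congr rfl fun f _ => ?_
  have h2 := MultilinearMap.map_smul_univ
    (Matrix.detRowAlternating : (Fin n → ℝ) [⋀^Fin n]→ₗ[ℝ] ℝ).toMultilinearMap
    (fun i => A i (f i)) (fun i j => B j (f i))
  simp [smul_eq_mul] at h2
  exact h2

lemma Dmat_expand (A : Matrix (Fin n) (Fin m) ℝ) (f : Fin n → Fin m) :
    Dmat A f = ∑ σ : Equiv.Perm (Fin n), (Equiv.Perm.sign σ : ℝ) * ∏ i, A i (f (σ i)) := by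
  rw [Dmat, Matrix.det_apply]
  refine Finset.sum_congr rfl fun σ _ => ?_
  simp [Units.smul_def, zsmul_eq_mul]

lemma sum_Dmat_mul (A B : Matrix (Fin n) (Fin m) ℝ) :
    ∑ f : Fin n → Fin m, Dmat A f * Dmat B f = (n.factorial : ℝ) * (A * Bᵀ).det := by
  have key : ∀ σ : Equiv.Perm (Fin n),
      ∑ f : Fin n → Fin m, ((Equiv.Perm.sign σ : ℝ) * ∏ i, A i (f (σ i))) * Dmat B f
        = (A * Bᵀ).det := by
    intro σ
    have reindex : ∑ f : Fin n → Fin m, ((Equiv.Perm.sign σ : ℝ) * ∏ i, A i (f (σ i))) * Dmat B f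
        = ∑ g : Fin n → Fin m,
            ((Equiv.Perm.sign σ : ℝ) * ∏ i, A i (g i)) * Dmat B (g ∘ σ.symm) := by
      refine Fintype.sum_bijective (fun f : Fin n → Fin m => f ∘ σ)
        ((Equiv.arrowCongr σ.symm (Equiv.refl (Fin m))).bijective) _ _ fun f => ?_
      have hf : (f ∘ σ) ∘ σ.symm = f := by ext i; simp
      rw [hf]
      rfl
    rw [reindex]
    rw [det_mul_transpose_expand]
    refine Finset.sum_congr rfl fun g _ => ?_
    rw [Dmat_comp B g σ.symm]
    have hs : (Equiv.Perm.sign σ.symm : ℝ) = (Equiv.Perm.sign σ : ℝ) := by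
      rw [Equiv.Perm.sign_symm]
    rw [hs]
    have hsq : (Equiv.Perm.sign σ : ℝ) * (Equiv.Perm.sign σ : ℝ) = 1 := by
      rcases Int.units_eq_one_or (Equiv.Perm.sign σ) with h | h <;> simp [h]
    calc ((Equiv.Perm.sign σ : ℝ) * ∏ i, A i (g i)) * ((Equiv.Perm.sign σ : ℝ) * Dmat B g)
        = ((Equiv.Perm.sign σ : ℝ) * (Equiv.Perm.sign σ : ℝ)) * ((∏ i, A i (g i)) * Dmat B g) := by
          ring
      _ = (∏ i, A i (g i)) * Dmat B g := by rw [hsq, one_mul]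
  calc ∑ f : Fin n → Fin m, Dmat A f * Dmat B f
      = ∑ f : Fin n → Fin m, ∑ σ : Equiv.Perm (Fin n),
          ((Equiv.Perm.sign σ : ℝ) * ∏ i, A i (f (σ i))) * Dmat B f := by
        refine Finset.sum_congr rfl fun f _ => ?_
        rw [Dmat_expand, Finset.sum_mul]
    _ = ∑ σ : Equiv.Perm (Fin n), ∑ f : Fin n → Fin m,
          ((Equiv.Perm.sign σ : ℝ) * ∏ i, A i (f (σ i))) * Dmat B f := Finset.sum_comm
    _ = ∑ _σ : Equiv.Perm (Fin n), (A * Bᵀ).det := by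
        exact Finset.sum_congr rfl fun σ _ => key σ
    _ = (n.factorial : ℝ) * (A * Bᵀ).det := by
        simp [Finset.card_univ, Fintype.card_perm]

lemma det_mul_transpose_sq_le (A B : Matrix (Fin n) (Fin m) ℝ) :
    (A * Bᵀ).det ^ 2 ≤ (A * Aᵀ).det * (B * Bᵀ).det := by
  have hcs := Finset.sum_mul_sq_le_sq_mul_sq Finset.univ (Dmat A) (Dmat B)
  rw [sum_Dmat_mul A B] at hcs
  have hA : ∑ f : Fin n → Fin m, Dmat A f ^ 2 = (n.factorial : ℝ) * (A * Aᵀ).det := by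
    simpa [sq] using sum_Dmat_mul A A
  have hB : ∑ f : Fin n → Fin m, Dmat B f ^ 2 = (n.factorial : ℝ) * (B * Bᵀ).det := by
    simpa [sq] using sum_Dmat_mul B B
  rw [hA, hB] at hcs
  have hfac : (0 : ℝ) < (n.factorial : ℝ) ^ 2 := by positivity
  have : (n.factorial : ℝ) ^ 2 * (A * Bᵀ).det ^ 2
      ≤ (n.factorial : ℝ) ^ 2 * ((A * Aᵀ).det * (B * Bᵀ).det) := by
    calc (n.factorial : ℝ) ^ 2 * (A * Bᵀ).det ^ 2
        = ((n.factorial : ℝ) * (A * Bᵀ).det) ^ 2 := by ring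
      _ ≤ ((n.factorial : ℝ) * (A * Aᵀ).det) * ((n.factorial : ℝ) * (B * Bᵀ).det) := hcs
      _ = (n.factorial : ℝ) ^ 2 * ((A * Aᵀ).det * (B * Bᵀ).det) := by ring
  exact le_of_mul_le_mul_left (by simpa using this) hfac

theorem gram_det_cauchy_schwarz {V : Type*} [NormedAddCommGroup V] [InnerProductSpace ℝ V]
    {n : ℕ} (a b : Fin n → V) :
    ((Matrix.of fun i j => (inner ℝ (a i) (b j) : ℝ)).det) ^ 2 ≤
      (Matrix.of fun i j => (inner ℝ (a i) (a j) : ℝ)).det *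
        (Matrix.of fun i j => (inner ℝ (b i) (b j) : ℝ)).det := by
  set W := Submodule.span ℝ (Set.range a ∪ Set.range b) with hW
  have hfin : FiniteDimensional ℝ W :=
    FiniteDimensional.span_of_finite ℝ ((Set.finite_range a).union (Set.finite_range b))
  set m := Module.finrank ℝ W with hm
  let e : OrthonormalBasis (Fin m) ℝ W := stdOrthonormalBasis ℝ W
  have ha : ∀ i, a i ∈ W := fun i => Submodule.subset_span (Or.inl ⟨i, rfl⟩)
  have hb : ∀ i, b i ∈ W := fun i => Submodule.subset_span (Or.inr ⟨i, rfl⟩)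
  let a' : Fin n → W := fun i => ⟨a i, ha i⟩
  let b' : Fin n → W := fun i => ⟨b i, hb i⟩
  let A : Matrix (Fin n) (Fin m) ℝ := Matrix.of fun i k => (inner ℝ (a' i) (e k) : ℝ)
  let B : Matrix (Fin n) (Fin m) ℝ := Matrix.of fun j k => (inner ℝ (b' j) (e k) : ℝ)
  have key : ∀ (x y : Fin n → W) (X Y : Matrix (Fin n) (Fin m) ℝ),
      (∀ i k, X i k = (inner ℝ (x i) (e k) : ℝ)) → (∀ j k, Y j k = (inner ℝ (y j) (e k) : ℝ)) →
      (Matrix.of fun i j => (inner ℝ (x i : V) (y j : V) : ℝ)) = X * Yᵀ := by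
    intro x y X Y hX hY
    ext i j
    have := e.sum_inner_mul_inner (x i) (y j)
    simp only [Matrix.mul_apply, Matrix.of_apply, Matrix.transpose_apply, hX, hY]
    rw [← Submodule.coe_inner, ← this]
    refine Finset.sum_congr rfl fun k _ => ?_
    rw [real_inner_comm (y j) (e k)]
  rw [key a' b' A B (fun _ _ => rfl) (fun _ _ => rfl),
      key a' a' A A (fun _ _ => rfl) (fun _ _ => rfl),
      key b' b' B B (fun _ _ => rfl) (fun _ _ => rfl)]
  exact det_mul_transpose_sq_le A B
end

section
/- Equality holds in the Gram-determinant Cauchy–Schwarz inequality, i.e. (det(⟨aᵢ,bⱼ⟩))² = det(⟨aᵢ,aⱼ⟩)·det(⟨bᵢ,bⱼ⟩), with both sides nonzero, if and only if a₁,…,aₙ are linearly independent, b₁,…,bₙ are linearly independent, and span{a₁,…,aₙ} = span{b₁,…,bₙ}. -/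
open Matrix

lemma euclid_sum_apply {m n : ℕ} (g : Fin n → ℝ) (v : Fin n → EuclideanSpace ℝ (Fin m))
    (k : Fin m) : (∑ i, g i • v i) k = ∑ i, g i * v i k := by
  induction (Finset.univ : Finset (Fin n)) using Finset.induction with
  | empty => rfl
  | @insert c s h ih => rw [Finset.sum_insert h, Finset.sum_insert h, ← ih]; rfl

lemma psd_det_one_add_eq_one {m : Type*} [Fintype m] [DecidableEq m]
    {S : Matrix m m ℝ} (hS : S.PosSemidef) (h : (1 + S).det = 1) : S = 0 := by
  have hH := hS.isHermitian
  set U : Matrix m m ℝ := (hH.eigenvectorUnitary : Matrix m m ℝ) with hUdef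
  have hU : U * star U = 1 := (Matrix.mem_unitaryGroup_iff).mp hH.eigenvectorUnitary.2
  set d : m → ℝ := hH.eigenvalues with hddef
  have hspec : S = U * diagonal d * star U := hH.spectral_theorem
  have hone : (1 + S) = U * (1 + diagonal d) * star U := by
    rw [mul_add, add_mul, mul_one, hU, hspec]
  have hdetU : U.det * (star U).det = 1 := by
    rw [← det_mul, hU, det_one]
  have hdet : (1 + S).det = ∏ i, (1 + d i) := by
    rw [hone, det_mul, det_mul]
    have h1 : (1 + diagonal d) = diagonal (fun i => 1 + d i) := by
      rw [← diagonal_one, diagonal_add]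
    rw [h1, det_diagonal, mul_right_comm, hdetU, one_mul]
  have hnn : ∀ j, (1:ℝ) ≤ 1 + d j := by
    intro j
    have := hS.eigenvalues_nonneg j
    linarith
  have hprod : ∏ j, (1 + d j) = 1 := by rw [← hdet, h]
  have hd0 : d = 0 := by
    funext i
    have hle : 1 + d i ≤ ∏ j, (1 + d j) := by
      have hp := Finset.prod_le_prod (s := Finset.univ)
        (f := fun j => if j = i then 1 + d i else 1) (g := fun j => 1 + d j)
        (fun j _ => by by_cases hj : j = i <;> simp [hj] <;> linarith [hnn i])
        (fun j _ => by by_cases hj : j = i <;> simp [hj, hnn j])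
      simpa using hp
    rw [hprod] at hle
    have := hnn i
    have : d i = 0 := by linarith
    simpa using this
  have hz : Matrix.diagonal (0 : m → ℝ) = 0 := by
    ext i j; by_cases hij : i = j <;> simp [Matrix.diagonal, hij]
  rw [hspec, hd0, hz, mul_zero, zero_mul]

open scoped MatrixOrder in
lemma psd_det_add_eq_zero {m : Type*} [Fintype m] [DecidableEq m]
    {X Y : Matrix m m ℝ} (hX : X.PosSemidef) (hY : Y.PosSemidef)
    (hdX : X.det ≠ 0) (h : (X + Y).det = X.det) : Y = 0 := by
  set R := CFC.sqrt X with hRdef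
  have hRpsd : R.PosSemidef := (CFC.sqrt_nonneg X).posSemidef
  have hRR : R * R = X := CFC.sqrt_mul_sqrt_self X hX.nonneg
  have hdR : R.det ≠ 0 := by
    intro h0
    apply hdX
    rw [← hRR, det_mul, h0, zero_mul]
  have hinv1 : R * R⁻¹ = 1 := mul_nonsing_inv R (isUnit_iff_ne_zero.mpr hdR)
  have hinv2 : R⁻¹ * R = 1 := nonsing_inv_mul R (isUnit_iff_ne_zero.mpr hdR)
  have hinvH : (R⁻¹)ᴴ = R⁻¹ := hRpsd.inv.isHermitian
  set S := R⁻¹ * Y * R⁻¹ with hSdef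
  have hSpsd : S.PosSemidef := by
    have := hY.conjTranspose_mul_mul_same (R⁻¹)
    rwa [hinvH] at this
  have hRSR : R * S * R = Y := by
    rw [hSdef]
    calc R * (R⁻¹ * Y * R⁻¹) * R = (R * R⁻¹) * Y * (R⁻¹ * R) := by
          simp only [Matrix.mul_assoc]
    _ = Y := by rw [hinv1, hinv2, one_mul, mul_one]
  have hXY : X + Y = R * (1 + S) * R := by
    rw [mul_add, add_mul, mul_one, hRR, hRSR]
  have hdet1 : (1 + S).det = 1 := by
    have hd : (X + Y).det = X.det * (1 + S).det := by
      rw [hXY, det_mul, det_mul, ← hRR, det_mul]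
      ring
    rw [h] at hd
    field_simp at hd
    linarith [hd]
  have := psd_det_one_add_eq_one hSpsd hdet1
  rw [← hRSR, this, mul_zero, zero_mul]

lemma det_conjTranspose_mul_self_ne_zero_iff {m n : Type*} [Fintype m] [Fintype n] [DecidableEq n]
    {A : Matrix m n ℝ} :
    (Aᴴ * A).det ≠ 0 ↔ LinearIndependent ℝ (fun i : n => (fun k : m => A k i)) := by
  have hsum : ∀ g : n → ℝ, (∑ i, g i • (fun k : m => A k i)) = A *ᵥ g := by
    intro g
    funext k
    simp [Matrix.mulVec, dotProduct, Finset.sum_apply, mul_comm]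
  constructor
  · intro hdet
    rw [Fintype.linearIndependent_iff]
    intro g hg i
    rw [hsum] at hg
    have h1 : (Aᴴ * A) *ᵥ g = 0 := by
      rw [← Matrix.mulVec_mulVec, hg, Matrix.mulVec_zero]
    have h2 : g = 0 := by
      by_contra hg0
      exact hdet (Matrix.exists_mulVec_eq_zero_iff.mp ⟨g, hg0, h1⟩)
    rw [h2]; rfl
  · intro hli hdet
    obtain ⟨v, hv, hv0⟩ := Matrix.exists_mulVec_eq_zero_iff.mpr hdet
    have hAv : A *ᵥ v = 0 := (Matrix.conjTranspose_mul_self_mulVec_eq_zero A v).mp hv0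
    have := Fintype.linearIndependent_iff.mp hli v (by rw [hsum]; exact hAv)
    exact hv (funext this)

theorem gram_det_cauchy_schwarz_equality_iff {V : Type*} [NormedAddCommGroup V]
    [InnerProductSpace ℝ V] {n : ℕ} (a b : Fin n → V) :
    (((Matrix.of fun i j => (inner ℝ (a i) (b j) : ℝ)).det) ^ 2 =
        (Matrix.of fun i j => (inner ℝ (a i) (a j) : ℝ)).det *
          (Matrix.of fun i j => (inner ℝ (b i) (b j) : ℝ)).det ∧
      (Matrix.of fun i j => (inner ℝ (a i) (a j) : ℝ)).det *
          (Matrix.of fun i j => (inner ℝ (b i) (b j) : ℝ)).det ≠ 0) ↔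
    (LinearIndependent ℝ a ∧ LinearIndependent ℝ b ∧
      Submodule.span ℝ (Set.range a) = Submodule.span ℝ (Set.range b)) := by
  classical
  set W : Submodule ℝ V := Submodule.span ℝ (Set.range a ∪ Set.range b) with hWdef
  have hWfin : FiniteDimensional ℝ W :=
    FiniteDimensional.span_of_finite ℝ ((Set.finite_range a).union (Set.finite_range b))
  set m := Module.finrank ℝ W with hm
  let o : OrthonormalBasis (Fin m) ℝ W := stdOrthonormalBasis ℝ W
  have haW : ∀ i, a i ∈ W := fun i => Submodule.subset_span (Set.mem_union_left _ ⟨i, rfl⟩)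
  have hbW : ∀ j, b j ∈ W := fun j => Submodule.subset_span (Set.mem_union_right _ ⟨j, rfl⟩)
  set a' : Fin n → W := fun i => ⟨a i, haW i⟩ with ha'def
  set b' : Fin n → W := fun j => ⟨b j, hbW j⟩ with hb'def
  set A : Matrix (Fin m) (Fin n) ℝ := Matrix.of fun k i => o.repr (a' i) k with hAdef
  set B : Matrix (Fin m) (Fin n) ℝ := Matrix.of fun k j => o.repr (b' j) k with hBdef
  -- inner products via coordinates
  have hinner : ∀ (x y : W), (inner ℝ (x:V) (y:V) : ℝ) = ∑ k, o.repr x k * o.repr y k := by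
    intro x y
    rw [← Submodule.coe_inner, ← o.sum_inner_mul_inner x y]
    congr 1; funext k
    rw [o.repr_apply_apply, o.repr_apply_apply, real_inner_comm x]
  have hMab : (Matrix.of fun i j => (inner ℝ (a i) (b j) : ℝ)) = Aᴴ * B := by
    ext i j
    simp only [Matrix.of_apply, Matrix.mul_apply, Matrix.conjTranspose_apply, star_trivial,
      hAdef, hBdef]
    exact hinner (a' i) (b' j)
  have hMaa : (Matrix.of fun i j => (inner ℝ (a i) (a j) : ℝ)) = Aᴴ * A := by
    ext i j
    simp only [Matrix.of_apply, Matrix.mul_apply, Matrix.conjTranspose_apply, star_trivial,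
      hAdef]
    exact hinner (a' i) (a' j)
  have hMbb : (Matrix.of fun i j => (inner ℝ (b i) (b j) : ℝ)) = Bᴴ * B := by
    ext i j
    simp only [Matrix.of_apply, Matrix.mul_apply, Matrix.conjTranspose_apply, star_trivial,
      hBdef]
    exact hinner (b' i) (b' j)
  -- linear independence transfer
  have htrans : ∀ (c' : Fin n → W) (C : Matrix (Fin m) (Fin n) ℝ),
      (∀ k i, C k i = o.repr (c' i) k) →
      (LinearIndependent ℝ (fun i => (c' i : V)) ↔
        LinearIndependent ℝ (fun i : Fin n => (fun k => C k i))) := by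
    intro c' C hC
    rw [Fintype.linearIndependent_iff, Fintype.linearIndependent_iff]
    refine forall_congr' fun g => imp_congr ?_ Iff.rfl
    have h1 : (∑ i, g i • (c' i : V)) = ((∑ i, g i • c' i : W) : V) := by
      simp
    have h2 : ∀ k, o.repr (∑ i, g i • c' i) k = ∑ i, g i * C k i := by
      intro k
      rw [map_sum]
      simp only [_root_.map_smul]
      rw [euclid_sum_apply]
      refine Finset.sum_congr rfl fun i _ => by rw [hC]
    constructor
    · intro h
      funext k
      have h0 : (∑ i, g i • c' i : W) = 0 := by
        apply Subtype.ext; rw [← h1, h]; rfl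
      have := h2 k
      rw [h0] at this
      simp only [map_zero] at this
      have hz : (0 : EuclideanSpace ℝ (Fin m)) k = 0 := rfl
      rw [hz] at this
      calc (∑ i, g i • fun k => C k i) k = ∑ i, g i * C k i := by
            rw [Finset.sum_apply]
            exact Finset.sum_congr rfl fun i _ => rfl
      _ = 0 := this.symm
      -- careful
    · intro h
      have hrep : o.repr (∑ i, g i • c' i) = 0 := by
        ext k
        rw [h2 k]
        have : (∑ i, g i • fun k => C k i : Fin m → ℝ) k = ∑ i, g i * C k i := by
          rw [Finset.sum_apply]
          exact Finset.sum_congr rfl fun i _ => rfl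
        rw [← this, h]; rfl
      have : (∑ i, g i • c' i : W) = 0 := by
        have := o.repr.injective (by rw [hrep, map_zero] : o.repr (∑ i, g i • c' i) = o.repr 0)
        exact this
      rw [h1, this]
      simp
  have hindA : LinearIndependent ℝ a ↔ LinearIndependent ℝ (fun i : Fin n => (fun k => A k i)) :=
    htrans a' A (fun k i => rfl)
  have hindB : LinearIndependent ℝ b ↔ LinearIndependent ℝ (fun j : Fin n => (fun k => B k j)) :=
    htrans b' B (fun k j => rfl)
  -- coefficients transfer
  have hcoeff : ∀ (c : Fin n → ℝ) (x' : W),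
      ((x' : V) = ∑ i, c i • a i) ↔ (∀ k, o.repr x' k = ∑ i, A k i * c i) := by
    intro c x'
    have hsum : ((∑ i, c i • a' i : W) : V) = ∑ i, c i • a i := by simp [ha'def]
    have e1 : ((x' : V) = ∑ i, c i • a i) ↔ x' = ∑ i, c i • a' i := by
      rw [← hsum]
      exact ⟨fun h => Subtype.ext h, fun h => by rw [h]⟩
    have e2 : (x' = ∑ i, c i • a' i) ↔ ∀ k, o.repr x' k = ∑ i, A k i * c i := by
      rw [← o.repr.injective.eq_iff, WithLp.ext_iff, funext_iff]
      refine forall_congr' fun k => ?_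
      have : o.repr (∑ i, c i • a' i) k = ∑ i, A k i * c i := by
        rw [map_sum]
        simp only [_root_.map_smul]
        rw [euclid_sum_apply]
        exact Finset.sum_congr rfl fun i _ => mul_comm _ _
      rw [this]
    rw [e1, e2]
  -- main equivalence
  rw [hMab, hMaa, hMbb]
  constructor
  · rintro ⟨hsq, hne⟩
    have hdA : (Aᴴ * A).det ≠ 0 := fun h => hne (by rw [h, zero_mul])
    have hdB : (Bᴴ * B).det ≠ 0 := fun h => hne (by rw [h, mul_zero])
    have hliA : LinearIndependent ℝ a := hindA.mpr (det_conjTranspose_mul_self_ne_zero_iff.mp hdA)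
    have hliB : LinearIndependent ℝ b := hindB.mpr (det_conjTranspose_mul_self_ne_zero_iff.mp hdB)
    refine ⟨hliA, hliB, ?_⟩
    -- construct C with B = A * C
    set G := Aᴴ * A with hGdef
    have hGinv : G * G⁻¹ = 1 := mul_nonsing_inv G (isUnit_iff_ne_zero.mpr hdA)
    set C : Matrix (Fin n) (Fin n) ℝ := G⁻¹ * (Aᴴ * B) with hCdef
    have hGC : G * C = Aᴴ * B := by
      rw [hCdef, ← Matrix.mul_assoc, hGinv, Matrix.one_mul]
    set D := B - A * C with hDdef
    have hAD : Aᴴ * D = 0 := by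
      rw [hDdef, Matrix.mul_sub, ← Matrix.mul_assoc, hGC, sub_self]
    have hBAC : B = A * C + D := by rw [hDdef]; abel
    have hBB : Bᴴ * B = Cᴴ * G * C + Dᴴ * D := by
      have hDA : Dᴴ * A = 0 := by
        have := congrArg Matrix.conjTranspose hAD
        rwa [Matrix.conjTranspose_mul, Matrix.conjTranspose_conjTranspose,
          Matrix.conjTranspose_zero] at this
      rw [hBAC, Matrix.conjTranspose_add, Matrix.add_mul, Matrix.mul_add, Matrix.mul_add,
        Matrix.conjTranspose_mul, hGdef]
      simp only [Matrix.mul_assoc]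
      rw [hAD, ← Matrix.mul_assoc Dᴴ A C, hDA]
      simp [Matrix.mul_zero, Matrix.zero_mul, add_zero, zero_add]
    have hdetC2 : (Bᴴ * B).det = G.det * C.det ^ 2 := by
      have h1 : (Aᴴ * B).det = G.det * C.det := by rw [← hGC, det_mul]
      have h2 : (G.det * C.det) ^ 2 = G.det * (Bᴴ * B).det := by rw [← h1]; exact hsq
      have h3 : G.det * (G.det * C.det ^ 2) = G.det * (Bᴴ * B).det := by
        rw [← h2]; ring
      exact (mul_left_cancel₀ hdA h3).symm
    have hXdet : (Cᴴ * G * C).det = G.det * C.det ^ 2 := by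
      rw [det_mul, det_mul, det_conjTranspose, star_trivial]
      ring
    have hXpsd : (Cᴴ * G * C).PosSemidef :=
      (posSemidef_conjTranspose_mul_self A).conjTranspose_mul_mul_same C
    have hYpsd : (Dᴴ * D).PosSemidef := posSemidef_conjTranspose_mul_self D
    have hXdne : (Cᴴ * G * C).det ≠ 0 := by rw [hXdet, ← hdetC2]; exact hdB
    have hsum_det : (Cᴴ * G * C + Dᴴ * D).det = (Cᴴ * G * C).det := by
      rw [← hBB, hdetC2, hXdet]
    have hD0 : Dᴴ * D = 0 := psd_det_add_eq_zero hXpsd hYpsd hXdne hsum_det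
    have hDzero : D = 0 := conjTranspose_mul_self_eq_zero.mp hD0
    have hBeq : B = A * C := by
      have := hBAC
      rw [hDzero, add_zero] at this
      exact this
    -- span b ≤ span a
    have hble : Submodule.span ℝ (Set.range b) ≤ Submodule.span ℝ (Set.range a) := by
      rw [Submodule.span_le]
      rintro x ⟨j, rfl⟩
      have hj : (b' j : V) = ∑ i, (fun i => C i j) i • a i := by
        rw [hcoeff]
        intro k
        have : B k j = (A * C) k j := by rw [hBeq]
        rw [show o.repr (b' j) k = B k j from rfl, this, Matrix.mul_apply]
      have : b j = ∑ i, C i j • a i := hj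
      rw [this]
      exact Submodule.sum_mem _ fun i _ =>
        Submodule.smul_mem _ _ (Submodule.subset_span ⟨i, rfl⟩)
    have hfr : Module.finrank ℝ (Submodule.span ℝ (Set.range a)) ≤
        Module.finrank ℝ (Submodule.span ℝ (Set.range b)) := by
      rw [finrank_span_eq_card hliA, finrank_span_eq_card hliB]
    have : FiniteDimensional ℝ (Submodule.span ℝ (Set.range a)) :=
      FiniteDimensional.span_of_finite ℝ (Set.finite_range a)
    exact (Submodule.eq_of_le_of_finrank_le hble hfr).symm
  · rintro ⟨hliA, hliB, hspan⟩
    have hdA : (Aᴴ * A).det ≠ 0 := det_conjTranspose_mul_self_ne_zero_iff.mpr (hindA.mp hliA)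
    have hdB : (Bᴴ * B).det ≠ 0 := det_conjTranspose_mul_self_ne_zero_iff.mpr (hindB.mp hliB)
    have hbmem : ∀ j, ∃ c : Fin n → ℝ, ∑ i, c i • a i = b j := by
      intro j
      have : b j ∈ Submodule.span ℝ (Set.range a) := by
        rw [hspan]
        exact Submodule.subset_span ⟨j, rfl⟩
      exact (Submodule.mem_span_range_iff_exists_fun ℝ).mp this
    choose c hc using hbmem
    set C : Matrix (Fin n) (Fin n) ℝ := Matrix.of fun i j => c j i with hCdef
    have hBeq : B = A * C := by
      ext k j
      have : (b' j : V) = ∑ i, (fun i => C i j) i • a i := by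
        simp only [hCdef, Matrix.of_apply]
        exact (hc j).symm
      have h2 := (hcoeff (fun i => C i j) (b' j)).mp this k
      rw [show B k j = o.repr (b' j) k from rfl, h2, Matrix.mul_apply]
    constructor
    · rw [hBeq, show Aᴴ * (A * C) = (Aᴴ * A) * C from (Matrix.mul_assoc _ _ _).symm,
        show (A * C)ᴴ * (A * C) = Cᴴ * ((Aᴴ * A) * C) from by
          rw [Matrix.conjTranspose_mul, Matrix.mul_assoc, ← Matrix.mul_assoc Aᴴ A C],
        det_mul, det_mul, det_mul, det_conjTranspose, star_trivial]
      ring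
    · exact mul_ne_zero hdA hdB
end

section
/- Let a₁,…,aₙ be linearly independent vectors in a real inner product space and let d₁,…,dₙ be vectors each orthogonal to span{a₁,…,aₙ}. Then det(⟨aᵢ+dᵢ, aⱼ+dⱼ⟩) ≥ det(⟨aᵢ, aⱼ⟩), with equality if and only if d₁ = ⋯ = dₙ = 0. -/
open Matrix

section Aux

variable {V : Type*} [NormedAddCommGroup V] [InnerProductSpace ℝ V] {n : ℕ}

lemma gram_quad_eq (v : Fin n → V) (x : Fin n → ℝ) :
    star x ⬝ᵥ (Matrix.of fun i j => (inner ℝ (v i) (v j) : ℝ)) *ᵥ x =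
      (inner ℝ (∑ i, x i • v i) (∑ j, x j • v j) : ℝ) := by
  simp only [star_trivial, dotProduct, mulVec, dotProduct, Matrix.of_apply]
  rw [sum_inner]
  refine Finset.sum_congr rfl fun i _ => ?_
  rw [inner_sum, Finset.mul_sum]
  refine Finset.sum_congr rfl fun j _ => ?_
  rw [real_inner_smul_left, real_inner_smul_right]
  ring

lemma gram_posSemidef (v : Fin n → V) :
    (Matrix.of fun i j => (inner ℝ (v i) (v j) : ℝ)).PosSemidef := by
  refine Matrix.PosSemidef.of_dotProduct_mulVec_nonneg ?_ ?_
  · ext i j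
    simp [Matrix.conjTranspose_apply, real_inner_comm]
  · intro x
    rw [gram_quad_eq]
    exact real_inner_self_nonneg

lemma gram_posDef (v : Fin n → V) (hv : LinearIndependent ℝ v) :
    (Matrix.of fun i j => (inner ℝ (v i) (v j) : ℝ)).PosDef := by
  refine Matrix.PosDef.of_dotProduct_mulVec_pos (gram_posSemidef v).1 fun ⦃x⦄ hx => ?_
  rw [gram_quad_eq]
  have hs : (∑ i, x i • v i) ≠ 0 := fun h =>
    hx (funext fun i => Fintype.linearIndependent_iff.mp hv x h i)
  have hnn : (0:ℝ) ≤ inner ℝ (∑ i, x i • v i) (∑ j, x j • v j) := real_inner_self_nonneg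
  have hne : (inner ℝ (∑ i, x i • v i) (∑ j, x j • v j) : ℝ) ≠ 0 := fun h =>
    hs (inner_self_eq_zero.mp h)
  exact lt_of_le_of_ne hnn (Ne.symm hne)

lemma det_one_add_psd {M : Matrix (Fin n) (Fin n) ℝ} (hM : M.PosSemidef) :
    1 ≤ (1 + M).det ∧ ((1 + M).det = 1 ↔ M = 0) := by
  have hH : M.IsHermitian := hM.isHermitian
  set U := (hH.eigenvectorUnitary : Matrix (Fin n) (Fin n) ℝ) with hUdef
  have hU : U * star U = 1 := mem_unitaryGroup_iff.mp hH.eigenvectorUnitary.2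
  have hUdet : U.det * (star U).det = 1 := by rw [← det_mul, hU, det_one]
  have hdec : 1 + M = U * (1 + diagonal (RCLike.ofReal ∘ hH.eigenvalues)) * star U := by
    rw [mul_add, add_mul, mul_one, hU]
    congr 1
    rw [hUdef]
    exact hH.spectral_theorem
  have hdiag : ((1 : Matrix (Fin n) (Fin n) ℝ) +
      diagonal (RCLike.ofReal ∘ hH.eigenvalues)).det = ∏ i, (1 + hH.eigenvalues i) := by
    have h : (1 : Matrix (Fin n) (Fin n) ℝ) + diagonal (RCLike.ofReal ∘ hH.eigenvalues)
        = diagonal (fun i => 1 + hH.eigenvalues i) := by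
      rw [← diagonal_one, diagonal_add]
      congr 1
    rw [h, det_diagonal]
  have hdet : (1 + M).det = ∏ i, (1 + hH.eigenvalues i) := by
    have h3 : (1 + M).det
        = U.det * ((1 : Matrix (Fin n) (Fin n) ℝ) +
            diagonal (RCLike.ofReal ∘ hH.eigenvalues)).det * (star U).det := by
      rw [hdec, det_mul, det_mul]
    have h4 : U.det * ((1 : Matrix (Fin n) (Fin n) ℝ) +
            diagonal (RCLike.ofReal ∘ hH.eigenvalues)).det * (star U).det
        = (U.det * (star U).det) * ((1 : Matrix (Fin n) (Fin n) ℝ) +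
            diagonal (RCLike.ofReal ∘ hH.eigenvalues)).det := by ring
    rw [h3, h4, hUdet, one_mul, hdiag]
  have hnn : ∀ i : Fin n, (1 : ℝ) ≤ 1 + hH.eigenvalues i := fun i => by
    have := hM.eigenvalues_nonneg i; linarith
  have hge : 1 ≤ (1 + M).det := by
    rw [hdet]
    calc (1:ℝ) = ∏ _i : Fin n, 1 := by simp
      _ ≤ ∏ i, (1 + hH.eigenvalues i) :=
          Finset.prod_le_prod (fun i _ => zero_le_one) (fun i _ => hnn i)
  refine ⟨hge, ?_, fun h => by rw [h]; simp⟩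
  intro h
  have hz : ∀ i, hH.eigenvalues i = 0 := by
    by_contra hc
    push_neg at hc
    obtain ⟨k, hk⟩ := hc
    have hklt : (1:ℝ) < 1 + hH.eigenvalues k := by
      have := hM.eigenvalues_nonneg k
      have : 0 < hH.eigenvalues k := lt_of_le_of_ne this (Ne.symm hk)
      linarith
    have : (1:ℝ) < ∏ i, (1 + hH.eigenvalues i) := by
      calc (1:ℝ) = ∏ _i : Fin n, 1 := by simp
        _ < ∏ i, (1 + hH.eigenvalues i) :=
            Finset.prod_lt_prod (fun i _ => zero_lt_one) (fun i _ => hnn i)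
              ⟨k, Finset.mem_univ k, hklt⟩
    rw [hdet] at h
    linarith
  have hzero : (RCLike.ofReal ∘ hH.eigenvalues : Fin n → ℝ) = 0 := by
    funext i; simp [hz i]
  rw [hH.spectral_theorem, hzero]
  have hdz : diagonal (0 : Fin n → ℝ) = 0 := by
    ext i j; simp [Matrix.diagonal_apply]
  rw [hdz, map_zero]

open scoped MatrixOrder in
lemma det_le_det_add_psd {A D : Matrix (Fin n) (Fin n) ℝ}
    (hA : A.PosDef) (hD : D.PosSemidef) :
    A.det ≤ (A + D).det ∧ ((A + D).det = A.det ↔ D = 0) := by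
  set S := CFC.sqrt A with hSdef
  have hS : S * S = A := CFC.sqrt_mul_sqrt_self A hA.posSemidef.nonneg
  have hSh : S.IsHermitian := (CFC.sqrt_nonneg A).posSemidef.isHermitian
  have hAdet : 0 < A.det := hA.det_pos
  have hSS : S.det * S.det = A.det := by rw [← det_mul, hS]
  have hSdet : S.det ≠ 0 := by
    intro h; rw [h, mul_zero] at hSS; exact hAdet.ne hSS
  have h1 : S * S⁻¹ = 1 := mul_nonsing_inv S hSdet.isUnit
  have h2 : S⁻¹ * S = 1 := nonsing_inv_mul S hSdet.isUnit
  set M := S⁻¹ * D * S⁻¹ with hMdef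
  have hM : M.PosSemidef := by
    have := hD.conjTranspose_mul_mul_same (B := S⁻¹)
    rwa [hSh.inv.eq] at this
  have hSMS : S * M * S = D := by
    rw [hMdef]
    calc S * (S⁻¹ * D * S⁻¹) * S = (S * S⁻¹) * D * (S⁻¹ * S) := by
          simp only [Matrix.mul_assoc]
      _ = D := by rw [h1, h2, one_mul, mul_one]
  have hdec : A + D = S * (1 + M) * S := by
    rw [mul_add, add_mul, mul_one, hS, hSMS]
  have hdet : (A + D).det = A.det * (1 + M).det := by
    have h3 : (A + D).det = S.det * (1 + M).det * S.det := by
      rw [hdec, det_mul, det_mul]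
    have h4 : S.det * (1 + M).det * S.det = (S.det * S.det) * (1 + M).det := by ring
    rw [h3, h4, hSS]
  obtain ⟨hge, heq⟩ := det_one_add_psd hM
  constructor
  · rw [hdet]
    nlinarith
  · rw [hdet]
    constructor
    · intro h
      have hX : (1 + M).det = 1 := by
        have h' : A.det * (1 + M).det = A.det * 1 := by rw [h, mul_one]
        exact mul_left_cancel₀ hAdet.ne' h'
      have hM0 : M = 0 := heq.mp hX
      rw [← hSMS, hM0]
      simp
    · intro h
      have hM0 : M = 0 := by rw [hMdef, h]; simp
      rw [hM0]
      simp

end Aux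

theorem gram_det_add_orthogonal_ge {V : Type*} [NormedAddCommGroup V] [InnerProductSpace ℝ V]
    {n : ℕ} (a d : Fin n → V) (ha : LinearIndependent ℝ a)
    (hd : ∀ i j : Fin n, (inner ℝ (d i) (a j) : ℝ) = 0) :
    (Matrix.of fun i j => (inner ℝ (a i) (a j) : ℝ)).det ≤
        (Matrix.of fun i j => (inner ℝ (a i + d i) (a j + d j) : ℝ)).det ∧
      ((Matrix.of fun i j => (inner ℝ (a i + d i) (a j + d j) : ℝ)).det =
          (Matrix.of fun i j => (inner ℝ (a i) (a j) : ℝ)).det ↔ ∀ i, d i = 0) := by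
  have hsplit : (Matrix.of fun i j => (inner ℝ (a i + d i) (a j + d j) : ℝ)) =
      (Matrix.of fun i j => (inner ℝ (a i) (a j) : ℝ)) +
        (Matrix.of fun i j => (inner ℝ (d i) (d j) : ℝ)) := by
    ext i j
    simp only [Matrix.of_apply, Matrix.add_apply]
    rw [inner_add_left, inner_add_right, inner_add_right]
    have h1 := hd i j
    have h2 : (inner ℝ (a i) (d j) : ℝ) = 0 := by rw [real_inner_comm]; exact hd j i
    linarith
  rw [hsplit]
  obtain ⟨h1, h2⟩ := det_le_det_add_psd (gram_posDef a ha) (gram_posSemidef d)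
  refine ⟨h1, h2.trans ?_⟩
  constructor
  · intro h i
    have hz : (inner ℝ (d i) (d i) : ℝ) = 0 := by
      have h' := congrFun (congrFun h i) i
      simpa using h'
    exact inner_self_eq_zero.mp hz
  · intro h
    ext i j
    simp [h i]
end

section
/- For real m×m orthogonal matrices A with det A = 1, the n×n minor of A formed from the first n rows and columns i₁<⋯<iₙ equals (−1)^{n(n+1)/2}·(−1)^{i₁+⋯+iₙ} times the complementary (m−n)×(m−n) minor (formed by deleting the first n rows and columns i₁,…,iₙ). -/
open Matrix

section JacobiAux

open Finset Equiv

lemma jac_sign_eq_signAux {k : ℕ} (σ : Equiv.Perm (Fin k)) :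
    Equiv.Perm.sign σ = Equiv.Perm.signAux σ := by
  refine Equiv.Perm.swap_induction_on σ ?_ ?_
  · simp [Equiv.Perm.signAux_one]
  · intro f x y hxy ih
    rw [Equiv.Perm.sign_mul, Equiv.Perm.signAux_mul, Equiv.Perm.sign_swap hxy,
      Equiv.Perm.signAux_swap hxy, ih]

lemma jac_signAux_eq_pow {k : ℕ} (σ : Equiv.Perm (Fin k)) :
    Equiv.Perm.signAux σ =
      (-1) ^ ((Equiv.Perm.finPairsLT k).filter (fun x => σ x.1 ≤ σ x.2)).card := by
  unfold Equiv.Perm.signAux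
  rw [← Finset.prod_filter_mul_prod_filter_not (Equiv.Perm.finPairsLT k)
    (fun x => σ x.1 ≤ σ x.2)]
  have h2 : ∏ x ∈ (Equiv.Perm.finPairsLT k).filter (fun x => ¬ σ x.1 ≤ σ x.2),
      (if σ x.1 ≤ σ x.2 then (-1 : ℤˣ) else 1) = 1 :=
    Finset.prod_eq_one fun x hx => if_neg (Finset.mem_filter.mp hx).2
  have h1 : ∏ x ∈ (Equiv.Perm.finPairsLT k).filter (fun x => σ x.1 ≤ σ x.2),
      (if σ x.1 ≤ σ x.2 then (-1 : ℤˣ) else 1)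
      = (-1) ^ ((Equiv.Perm.finPairsLT k).filter (fun x => σ x.1 ≤ σ x.2)).card := by
    rw [Finset.prod_congr rfl fun x hx => if_pos (Finset.mem_filter.mp hx).2,
      Finset.prod_const]
  rw [h1, h2, mul_one]

lemma jac_count_lt {m n : ℕ} (f : Fin n → Fin m) (hf : StrictMono f)
    (g : Fin (m - n) → Fin m) (hg : StrictMono g)
    (hcompl : Set.range g = (Set.range f)ᶜ) (i : Fin n) :
    (Finset.univ.filter fun j : Fin (m - n) => g j < f i).card = (f i : ℕ) - (i : ℕ) := by
  have key : (Finset.univ.filter fun x : Fin m => x < f i) =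
      ((Finset.univ.filter fun i' : Fin n => i' < i).image f) ∪
        ((Finset.univ.filter fun j => g j < f i).image g) := by
    ext x
    simp only [Finset.mem_filter, Finset.mem_univ, true_and, Finset.mem_union,
      Finset.mem_image]
    constructor
    · intro hx
      by_cases hxf : x ∈ Set.range f
      · obtain ⟨i', rfl⟩ := hxf
        exact Or.inl ⟨i', hf.lt_iff_lt.mp hx, rfl⟩
      · have : x ∈ Set.range g := by rw [hcompl]; exact hxf
        obtain ⟨j, rfl⟩ := this
        exact Or.inr ⟨j, hx, rfl⟩
    · rintro (⟨i', hi', rfl⟩ | ⟨j, hj, rfl⟩)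
      · exact hf hi'
      · exact hj
  have hdisj : Disjoint ((Finset.univ.filter fun i' : Fin n => i' < i).image f)
      ((Finset.univ.filter fun j => g j < f i).image g) := by
    rw [Finset.disjoint_left]
    rintro x hxf hxg
    simp only [Finset.mem_image] at hxf hxg
    obtain ⟨i', _, rfl⟩ := hxf
    obtain ⟨j, _, hj⟩ := hxg
    have : g j ∈ (Set.range f)ᶜ := hcompl ▸ Set.mem_range_self j
    exact this ⟨i', hj.symm⟩
  have hc := congrArg Finset.card key
  rw [Finset.card_union_of_disjoint hdisj,
    Finset.card_image_of_injective _ hf.injective,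
    Finset.card_image_of_injective _ hg.injective] at hc
  have h1 : (Finset.univ.filter fun x : Fin m => x < f i).card = (f i : ℕ) := by
    rw [Finset.filter_gt_eq_Iio, Fin.card_Iio]
  have h2 : (Finset.univ.filter fun i' : Fin n => i' < i).card = (i : ℕ) := by
    rw [Finset.filter_gt_eq_Iio, Fin.card_Iio]
  omega

lemma jac_char {m n : ℕ} (hnm : n ≤ m) (f : Fin n → Fin m) (hf : StrictMono f)
    (g : Fin (m - n) → Fin m) (hg : StrictMono g)
    (hcompl : Set.range g = (Set.range f)ᶜ)
    (σ : Equiv.Perm (Fin m))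
    (hσf : ∀ i : Fin n, σ ⟨i.val, lt_of_lt_of_le i.isLt hnm⟩ = f i)
    (hσg : ∀ j : Fin (m - n), σ ⟨n + j.val, by have := j.isLt; omega⟩ = g j)
    (a b : Fin m) :
    (b < a ∧ σ a ≤ σ b) ↔
      ∃ (i : Fin n) (j : Fin (m - n)),
        (a : ℕ) = n + (j : ℕ) ∧ (b : ℕ) = (i : ℕ) ∧ g j < f i := by
  have hdisj : ∀ (i : Fin n) (j : Fin (m - n)), g j ≠ f i := by
    intro i j h
    have : g j ∈ (Set.range f)ᶜ := hcompl ▸ Set.mem_range_self j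
    exact this ⟨i, h.symm⟩
  have happf : ∀ (x : Fin m) (hx : (x : ℕ) < n), σ x = f ⟨x, hx⟩ := by
    intro x hx
    rw [← hσf ⟨x, hx⟩]
  have happg : ∀ (x : Fin m) (hx : ¬ (x : ℕ) < n),
      σ x = g ⟨(x : ℕ) - n, by have := x.isLt; omega⟩ := by
    intro x hx
    rw [← hσg ⟨(x : ℕ) - n, by have := x.isLt; omega⟩]
    exact congrArg σ (Fin.ext (by simp; omega))
  constructor
  · rintro ⟨hba, hle⟩
    by_cases ha : (a : ℕ) < n <;> by_cases hb : (b : ℕ) < n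
    · exfalso
      rw [happf a ha, happf b hb] at hle
      exact absurd (hf (show (⟨(b : ℕ), hb⟩ : Fin n) < ⟨(a : ℕ), ha⟩ from hba))
        (not_lt.mpr hle)
    · exfalso
      have hba' : (b : ℕ) < (a : ℕ) := hba
      omega
    · refine ⟨⟨(b : ℕ), hb⟩, ⟨(a : ℕ) - n, by have := a.isLt; omega⟩, by simp; omega, rfl, ?_⟩
      rw [happf b hb, happg a ha] at hle
      exact lt_of_le_of_ne hle (hdisj _ _)
    · exfalso
      rw [happg a ha, happg b hb] at hle
      have h' : ((⟨(b:ℕ) - n, by have := b.isLt; omega⟩ : Fin (m - n))) <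
          ⟨(a:ℕ) - n, by have := a.isLt; omega⟩ := by
        simp only [Fin.mk_lt_mk]
        have : (b : ℕ) < (a : ℕ) := hba
        omega
      exact absurd (hg h') (not_lt.mpr hle)
  · rintro ⟨i, j, hA, hB, hlt⟩
    have hba : b < a := by
      have : (b : ℕ) < (a : ℕ) := by have := i.isLt; omega
      exact this
    refine ⟨hba, ?_⟩
    have h1 : σ a = g j := by
      rw [happg a (by omega)]
      exact congrArg g (Fin.ext (by simp; omega))
    have h2 : σ b = f i := by
      rw [happf b (by omega : (b:ℕ) < n)]
      exact congrArg f (Fin.ext (by simp [hB]))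
    rw [h1, h2]
    exact hlt.le

lemma jac_card {m n : ℕ} (hnm : n ≤ m) (f : Fin n → Fin m) (hf : StrictMono f)
    (g : Fin (m - n) → Fin m) (hg : StrictMono g)
    (hcompl : Set.range g = (Set.range f)ᶜ)
    (σ : Equiv.Perm (Fin m))
    (hσf : ∀ i : Fin n, σ ⟨i.val, lt_of_lt_of_le i.isLt hnm⟩ = f i)
    (hσg : ∀ j : Fin (m - n), σ ⟨n + j.val, by have := j.isLt; omega⟩ = g j) :
    ((Equiv.Perm.finPairsLT m).filter (fun x => σ x.1 ≤ σ x.2)).card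
      = ∑ i : Fin n, ((f i : ℕ) - (i : ℕ)) := by
  classical
  have hchar := jac_char hnm f hf g hg hcompl σ hσf hσg
  set s := (Equiv.Perm.finPairsLT m).filter (fun x => σ x.1 ≤ σ x.2) with hs_def
  have hs : ∀ x : (Σ _ : Fin m, Fin m), x ∈ s ↔ (x.2 < x.1 ∧ σ x.1 ≤ σ x.2) := by
    intro x
    rw [hs_def, Finset.mem_filter, Equiv.Perm.mem_finPairsLT]
  set t := (Finset.univ : Finset (Fin n)).sigma
      (fun i => Finset.univ.filter fun j : Fin (m - n) => g j < f i) with ht_def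
  have ht : ∀ p : (Σ _ : Fin n, Fin (m - n)), p ∈ t ↔ g p.2 < f p.1 := by
    intro p
    rw [ht_def, Finset.mem_sigma, Finset.mem_filter]
    simp
  have hcard : s.card = t.card := by
    refine Finset.card_bij'
      (fun x hx => ⟨⟨(x.2 : ℕ), by
          obtain ⟨i, j, h1, h2, h3⟩ := (hchar x.1 x.2).mp ((hs x).mp hx)
          have := i.isLt; omega⟩,
        ⟨(x.1 : ℕ) - n, by
          obtain ⟨i, j, h1, h2, h3⟩ := (hchar x.1 x.2).mp ((hs x).mp hx)
          have := j.isLt; omega⟩⟩)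
      (fun p hp => ⟨⟨n + (p.2 : ℕ), by have := p.2.isLt; omega⟩,
        ⟨(p.1 : ℕ), lt_of_lt_of_le p.1.isLt hnm⟩⟩) ?_ ?_ ?_ ?_
    · intro x hx
      obtain ⟨i, j, h1, h2, h3⟩ := (hchar x.1 x.2).mp ((hs x).mp hx)
      rw [ht]
      have key : ∀ (hB : ((x.2 : ℕ)) < n) (hA : (x.1 : ℕ) - n < m - n),
          g ⟨(x.1 : ℕ) - n, hA⟩ < f ⟨(x.2 : ℕ), hB⟩ := by
        intro hB hA
        have e1 : (⟨(x.1 : ℕ) - n, hA⟩ : Fin (m - n)) = j := Fin.ext (by simp; omega)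
        have e2 : (⟨(x.2 : ℕ), hB⟩ : Fin n) = i := Fin.ext (by simpa using h2)
        rw [e1, e2]; exact h3
      exact key _ _
    · intro p hp
      rw [hs]
      rw [ht] at hp
      refine (hchar _ _).mpr ⟨p.1, p.2, by simp, by simp, hp⟩
    · intro x hx
      obtain ⟨i, j, h1, h2, h3⟩ := (hchar x.1 x.2).mp ((hs x).mp hx)
      obtain ⟨a1, a2⟩ := x
      exact Sigma.ext (Fin.ext (by simp at h1 ⊢; omega)) (heq_of_eq (Fin.ext (by simp)))
    · intro p hp
      obtain ⟨p1, p2⟩ := p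
      exact Sigma.ext (Fin.ext (by simp)) (heq_of_eq (Fin.ext (by simp)))
  rw [hcard, ht_def, Finset.card_sigma]
  exact Finset.sum_congr rfl fun i _ => jac_count_lt f hf g hg hcompl i

lemma jac_block {α β : Type*} [Fintype α] [Fintype β] [DecidableEq α] [DecidableEq β]
    (M : Matrix (α ⊕ β) (α ⊕ β) ℝ) (h : M * Mᵀ = 1) :
    (M.toBlocks₁₁).det = M.det * (M.toBlocks₂₂).det := by
  set P := M.toBlocks₁₁
  set Q := M.toBlocks₁₂
  set R := M.toBlocks₂₁
  set S := M.toBlocks₂₂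
  have hM : M = fromBlocks P Q R S := (fromBlocks_toBlocks M).symm
  rw [hM, fromBlocks_transpose, fromBlocks_multiply, ← fromBlocks_one] at h
  have h12 : P * Rᵀ + Q * Sᵀ = 0 := by
    have := congrArg Matrix.toBlocks₁₂ h
    simpa only [toBlocks_fromBlocks₁₂] using this
  have h22 : R * Rᵀ + S * Sᵀ = 1 := by
    have := congrArg Matrix.toBlocks₂₂ h
    simpa only [toBlocks_fromBlocks₂₂] using this
  have key : (fromBlocks P Q R S) * (fromBlocks 1 Rᵀ 0 Sᵀ) = fromBlocks P 0 R 1 := by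
    rw [fromBlocks_multiply]
    congr 1 <;> simp [h12, h22]
  have hdet := congrArg Matrix.det key
  rw [det_mul, det_fromBlocks_zero₂₁, det_fromBlocks_zero₁₂] at hdet
  simp only [det_one, one_mul, mul_one, det_transpose] at hdet
  rw [hM]
  linarith [hdet]

end JacobiAux

theorem jacobi_complementary_minor {m n : ℕ} (hn : 0 < n) (hnm : n < m)
    (A : Matrix (Fin m) (Fin m) ℝ) (hA : Aᵀ * A = 1) (hdet : A.det = 1)
    (f : Fin n → Fin m) (hf : StrictMono f)
    (g : Fin (m - n) → Fin m) (hg : StrictMono g)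
    (hcompl : Set.range g = (Set.range f)ᶜ) :
    (A.submatrix (fun i : Fin n => (⟨i.val, lt_of_lt_of_le i.isLt hnm.le⟩ : Fin m)) f).det =
      (-1 : ℝ) ^ (n * (n + 1) / 2 + ∑ i, ((f i : ℕ) + 1)) *
        (A.submatrix (fun i : Fin (m - n) =>
          (⟨n + i.val, by have := i.isLt; omega⟩ : Fin m)) g).det := by
  classical
  have hnm' : n ≤ m := hnm.le
  -- disjointness of ranges
  have hdisj : ∀ (i : Fin n) (j : Fin (m - n)), g j ≠ f i := by
    intro i j h
    have : g j ∈ (Set.range f)ᶜ := hcompl ▸ Set.mem_range_self j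
    exact this ⟨i, h.symm⟩
  -- the shuffle permutation
  set sfun : Fin m → Fin m := fun x =>
    if h : (x : ℕ) < n then f ⟨x, h⟩
    else g ⟨(x : ℕ) - n, by have := x.isLt; omega⟩ with hsfun
  have hinj : Function.Injective sfun := by
    intro x y hxy
    simp only [hsfun] at hxy
    by_cases hx : (x : ℕ) < n <;> by_cases hy : (y : ℕ) < n
    · rw [dif_pos hx, dif_pos hy] at hxy
      have h := hf.injective hxy
      simp only [Fin.mk.injEq] at h
      exact Fin.ext h
    · rw [dif_pos hx, dif_neg hy] at hxy
      exact absurd hxy.symm (hdisj _ _)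
    · rw [dif_neg hx, dif_pos hy] at hxy
      exact absurd hxy (hdisj _ _)
    · rw [dif_neg hx, dif_neg hy] at hxy
      have h := hg.injective hxy
      simp only [Fin.mk.injEq] at h
      exact Fin.ext (by omega)
  have hbij : Function.Bijective sfun := Finite.injective_iff_bijective.mp hinj
  set σ : Equiv.Perm (Fin m) := Equiv.ofBijective sfun hbij with hσdef
  have hσf : ∀ i : Fin n, σ ⟨i.val, lt_of_lt_of_le i.isLt hnm'⟩ = f i := by
    intro i
    show sfun _ = f i
    simp only [hsfun]
    rw [dif_pos i.isLt]
  have hσg : ∀ j : Fin (m - n), σ ⟨n + j.val, by have := j.isLt; omega⟩ = g j := by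
    intro j
    show sfun _ = g j
    simp only [hsfun]
    rw [dif_neg (by simp)]
    exact congrArg g (Fin.ext (by simp))
  -- the equivalence with the sum type
  have hadd : n + (m - n) = m := by omega
  set e : (Fin n ⊕ Fin (m - n)) ≃ Fin m := finSumFinEquiv.trans (finCongr hadd) with he_def
  set e2 : (Fin n ⊕ Fin (m - n)) ≃ Fin m := e.trans σ with he2_def
  set M : Matrix (Fin n ⊕ Fin (m - n)) (Fin n ⊕ Fin (m - n)) ℝ := A.submatrix e e2
    with hM_def
  -- M is orthogonal
  have hMo : M * Mᵀ = 1 := by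
    rw [mul_eq_one_comm]
    have : Mᵀ = Aᵀ.submatrix e2 e := by rw [hM_def, Matrix.transpose_submatrix]
    rw [this, hM_def]
    rw [show (Aᵀ.submatrix ⇑e2 ⇑e) * (A.submatrix ⇑e ⇑e2) = (Aᵀ * A).submatrix ⇑e2 ⇑e2 from
      Matrix.submatrix_mul_equiv Aᵀ A _ e _]
    rw [hA, Matrix.submatrix_one_equiv]
  -- determinant of M
  have hMdet : M.det = ((Equiv.Perm.sign σ : ℤ) : ℝ) := by
    have h1 : M = (A.submatrix id ⇑σ).submatrix ⇑e ⇑e := by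
      rw [Matrix.submatrix_submatrix]
      rfl
    rw [h1, Matrix.det_submatrix_equiv_self, Matrix.det_permute', hdet, mul_one]
  -- blocks of M
  have hB11 : M.toBlocks₁₁ =
      A.submatrix (fun i : Fin n => (⟨i.val, lt_of_lt_of_le i.isLt hnm.le⟩ : Fin m)) f := by
    ext i j
    show A (e (Sum.inl i)) (σ (e (Sum.inl j))) = A _ (f j)
    have h1 : e (Sum.inl i) = (⟨i.val, lt_of_lt_of_le i.isLt hnm.le⟩ : Fin m) :=
      Fin.ext (by simp [he_def])
    have h2 : e (Sum.inl j) = (⟨j.val, lt_of_lt_of_le j.isLt hnm'⟩ : Fin m) :=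
      Fin.ext (by simp [he_def])
    rw [h1, h2, hσf j]
  have hB22 : M.toBlocks₂₂ =
      A.submatrix (fun i : Fin (m - n) =>
        (⟨n + i.val, by have := i.isLt; omega⟩ : Fin m)) g := by
    ext i j
    show A (e (Sum.inr i)) (σ (e (Sum.inr j))) = A _ (g j)
    have h1 : e (Sum.inr i) = (⟨n + i.val, by have := i.isLt; omega⟩ : Fin m) :=
      Fin.ext (by simp [he_def])
    have h2 : e (Sum.inr j) = (⟨n + j.val, by have := j.isLt; omega⟩ : Fin m) :=
      Fin.ext (by simp [he_def])
    rw [h1, h2, hσg j]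
  -- block identity
  have hblock := jac_block M hMo
  rw [hB11, hB22, hMdet] at hblock
  rw [hblock]
  congr 1
  -- now the sign computation
  have hsign : Equiv.Perm.sign σ = (-1 : ℤˣ) ^ (∑ i : Fin n, ((f i : ℕ) - (i : ℕ))) := by
    rw [jac_sign_eq_signAux, jac_signAux_eq_pow,
      jac_card hnm' f hf g hg hcompl σ hσf hσg]
  rw [hsign]
  -- cast to ℝ
  have hcast : (((((-1 : ℤˣ) ^ (∑ i : Fin n, ((f i : ℕ) - (i : ℕ)))) : ℤˣ) : ℤ) : ℝ)
      = (-1 : ℝ) ^ (∑ i : Fin n, ((f i : ℕ) - (i : ℕ))) := by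
    push_cast
    norm_num
  rw [hcast]
  -- parity bookkeeping
  have hle : ∀ i : Fin n, (i : ℕ) ≤ (f i : ℕ) := by
    suffices H : ∀ k, ∀ i : Fin n, (i : ℕ) = k → k ≤ (f i : ℕ) by
      intro i; exact H _ i rfl
    intro k
    induction k with
    | zero => intro i _; exact Nat.zero_le _
    | succ k ih =>
      intro i hi
      have hk : k < n := by have := i.isLt; omega
      have h1 := ih ⟨k, hk⟩ rfl
      have h2 : f ⟨k, hk⟩ < f i := hf (by simp [Fin.lt_def]; omega)
      have h2' : (f ⟨k, hk⟩ : ℕ) < (f i : ℕ) := h2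
      omega
  set c := ∑ i : Fin n, ((f i : ℕ) - (i : ℕ)) with hc_def
  set Sf := ∑ i : Fin n, ((f i : ℕ)) with hSf_def
  set Si := ∑ i : Fin n, ((i : ℕ)) with hSi_def
  have hsum : c + Si = Sf := by
    rw [hc_def, hSi_def, hSf_def, ← Finset.sum_add_distrib]
    exact Finset.sum_congr rfl fun i _ => by have := hle i; omega
  have hSi2 : Si * 2 = n * (n - 1) := by
    rw [hSi_def, Fin.sum_univ_eq_sum_range (fun i => i)]
    exact Finset.sum_range_id_mul_two n
  have he1 : ∑ i : Fin n, ((f i : ℕ) + 1) = Sf + n := by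
    rw [Finset.sum_add_distrib, hSf_def]
    simp
  have hP : n * (n + 1) = n * n + n := by ring
  have hQ : n * (n - 1) + n = n * n := by
    cases n with
    | zero => simp
    | succ k => simp [Nat.succ_sub_one]; ring
  have hE : (n * (n + 1)) % 2 = 0 := Nat.even_iff.mp (Nat.even_mul_succ_self n)
  have hexp : n * (n + 1) / 2 + ∑ i : Fin n, ((f i : ℕ) + 1) = c + (n * n + n) := by
    rw [he1]
    have h2 : n * (n + 1) / 2 * 2 = n * (n + 1) := Nat.div_mul_cancel (by omega)
    generalize hPP : n * (n + 1) = P at h2 hP hE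
    generalize hQQ : n * (n - 1) = Q at hQ hSi2
    generalize hMM : n * n = Mv at hP hQ ⊢
    omega
  rw [hexp, pow_add]
  have hEe : Even (n * n + n) := by
    have := Nat.even_mul_succ_self n
    rwa [Nat.mul_succ] at this
  rw [hEe.neg_one_pow, mul_one]
end

section
/- Let V be a finite-dimensional real inner product space of dimension m, and Σ₁, Σ₂ two n-dimensional subspaces with orthonormal bases (a₁,…,aₙ) and (b₁,…,bₙ). Define cos φ(Σ₁,Σ₂) = |det(⟨aᵢ,bⱼ⟩)| (this is well-defined up to sign choice). Then |det(⟨aᵢ,bⱼ⟩)| = |det(⟨aᵢ*,bⱼ*⟩)| where (a₁*,…,a_{m−n}*) and (b₁*,…,b_{m−n}*) are orthonormal bases of the orthogonal complements Σ₁^⊥ and Σ₂^⊥. That is, the angle between two n-dimensional subspaces equals the angle between their orthogonal complements. -/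
open Matrix

theorem angle_subspaces_eq_angle_orthogonal_complements {V : Type*} [NormedAddCommGroup V]
    [InnerProductSpace ℝ V] [FiniteDimensional ℝ V] {m n : ℕ}
    (hm : Module.finrank ℝ V = m) (S1 S2 : Submodule ℝ V)
    (a b : Fin n → V) (astar bstar : Fin (m - n) → V)
    (ha : Orthonormal ℝ a) (hb : Orthonormal ℝ b)
    (hastar : Orthonormal ℝ astar) (hbstar : Orthonormal ℝ bstar)
    (hspa : Submodule.span ℝ (Set.range a) = S1)
    (hspb : Submodule.span ℝ (Set.range b) = S2)
    (hspas : Submodule.span ℝ (Set.range astar) = S1ᗮ)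
    (hspbs : Submodule.span ℝ (Set.range bstar) = S2ᗮ) :
    |(Matrix.of fun i j => (inner ℝ (a i) (b j) : ℝ)).det| =
      |(Matrix.of fun i j => (inner ℝ (astar i) (bstar j) : ℝ)).det| := by
  classical
  set e : Fin n ⊕ Fin (m - n) → V := Sum.elim a astar with he
  set f : Fin n ⊕ Fin (m - n) → V := Sum.elim b bstar with hf
  -- orthonormality of the combined families
  have key : ∀ (S : Submodule ℝ V) (u : Fin n → V) (w : Fin (m - n) → V),
      Orthonormal ℝ u → Orthonormal ℝ w →
      Submodule.span ℝ (Set.range u) = S → Submodule.span ℝ (Set.range w) = Sᗮ →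
      Orthonormal ℝ (Sum.elim u w) ∧
        ⊤ ≤ Submodule.span ℝ (Set.range (Sum.elim u w)) := by
    intro S u w hu hw hsu hsw
    have hmemu : ∀ i, u i ∈ S := fun i => hsu ▸ Submodule.subset_span ⟨i, rfl⟩
    have hmemw : ∀ i, w i ∈ Sᗮ := fun i => hsw ▸ Submodule.subset_span ⟨i, rfl⟩
    constructor
    · rw [orthonormal_iff_ite] at hu hw ⊢
      rintro (i | i) (j | j)
      · simpa using hu i j
      · simpa using (Submodule.mem_orthogonal S (w j)).mp (hmemw j) (u i) (hmemu i)
      · simpa using real_inner_comm (u j) (w i) ▸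
          (Submodule.mem_orthogonal S (w i)).mp (hmemw i) (u j) (hmemu j)
      · simpa using hw i j
    · rw [Set.Sum.elim_range, Submodule.span_union, hsu, hsw,
        Submodule.sup_orthogonal_of_hasOrthogonalProjection]
  obtain ⟨heon, hesp⟩ := key S1 a astar ha hastar hspa hspas
  obtain ⟨hfon, hfsp⟩ := key S2 b bstar hb hbstar hspb hspbs
  set eb := OrthonormalBasis.mk heon hesp with heb
  set fb := OrthonormalBasis.mk hfon hfsp with hfb
  have hebc : ⇑eb = e := OrthonormalBasis.coe_mk heon hesp
  have hfbc : ⇑fb = f := OrthonormalBasis.coe_mk hfon hfsp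
  set P : Matrix (Fin n) (Fin n) ℝ := Matrix.of fun i j => (inner ℝ (a i) (b j) : ℝ) with hP
  set Q : Matrix (Fin n) (Fin (m - n)) ℝ :=
    Matrix.of fun i j => (inner ℝ (a i) (bstar j) : ℝ) with hQ
  set R : Matrix (Fin (m - n)) (Fin n) ℝ :=
    Matrix.of fun i j => (inner ℝ (astar i) (b j) : ℝ) with hR
  set S : Matrix (Fin (m - n)) (Fin (m - n)) ℝ :=
    Matrix.of fun i j => (inner ℝ (astar i) (bstar j) : ℝ) with hS
  set G : Matrix (Fin n ⊕ Fin (m - n)) (Fin n ⊕ Fin (m - n)) ℝ :=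
    Matrix.of fun i j => (inner ℝ (e i) (f j) : ℝ) with hG
  have hGblocks : G = fromBlocks P Q R S := by
    ext (i | i) (j | j) <;> rfl
  have hGtG : Gᵀ * G = 1 := by
    ext i j
    rw [Matrix.mul_apply]
    have := eb.sum_inner_mul_inner (f i) (f j)
    rw [hebc] at this
    simp only [Matrix.transpose_apply, hG, Matrix.of_apply]
    calc ∑ k, (inner ℝ (e k) (f i) : ℝ) * inner ℝ (e k) (f j)
        = ∑ k, (inner ℝ (f i) (e k) : ℝ) * inner ℝ (e k) (f j) := by
          simp_rw [real_inner_comm]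
      _ = (inner ℝ (f i) (f j) : ℝ) := this
      _ = (1 : Matrix _ _ ℝ) i j := by
          rw [orthonormal_iff_ite] at hfon
          rw [hfon i j, Matrix.one_apply]
  have hGGt : G * Gᵀ = 1 := by
    ext i j
    rw [Matrix.mul_apply]
    have := fb.sum_inner_mul_inner (e i) (e j)
    rw [hfbc] at this
    simp only [Matrix.transpose_apply, hG, Matrix.of_apply]
    calc ∑ k, (inner ℝ (e i) (f k) : ℝ) * inner ℝ (e j) (f k)
        = ∑ k, (inner ℝ (e i) (f k) : ℝ) * inner ℝ (f k) (e j) := by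
          simp_rw [real_inner_comm]
      _ = (inner ℝ (e i) (e j) : ℝ) := this
      _ = (1 : Matrix _ _ ℝ) i j := by
          rw [orthonormal_iff_ite] at heon
          rw [heon i j, Matrix.one_apply]
  rw [hGblocks] at hGtG hGGt
  rw [Matrix.fromBlocks_transpose, Matrix.fromBlocks_multiply,
    ← Matrix.fromBlocks_one] at hGtG hGGt
  have t11 : Matrix.toBlocks₁₁ (1 : Matrix (Fin n ⊕ Fin (m - n)) (Fin n ⊕ Fin (m - n)) ℝ) = 1 := by
    ext i j
    simp [Matrix.toBlocks₁₁, Matrix.one_apply]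
  have t22 : Matrix.toBlocks₂₂ (1 : Matrix (Fin n ⊕ Fin (m - n)) (Fin n ⊕ Fin (m - n)) ℝ) = 1 := by
    ext i j
    simp [Matrix.toBlocks₂₂, Matrix.one_apply]
  have h1 : P * Pᵀ + Q * Qᵀ = 1 := by
    have := congrArg Matrix.toBlocks₁₁ hGGt
    simpa [Matrix.toBlocks_fromBlocks₁₁, t11] using this
  have h2 : Qᵀ * Q + Sᵀ * S = 1 := by
    have := congrArg Matrix.toBlocks₂₂ hGtG
    simpa [Matrix.toBlocks_fromBlocks₂₂, t22] using this
  have hP2 : P.det ^ 2 = (1 - Q * Qᵀ).det := by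
    rw [← eq_sub_iff_add_eq] at h1
    rw [← h1, Matrix.det_mul, Matrix.det_transpose, sq]
  have hS2 : S.det ^ 2 = (1 - Qᵀ * Q).det := by
    rw [add_comm, ← eq_sub_iff_add_eq] at h2
    rw [← h2, Matrix.det_mul, Matrix.det_transpose, sq, mul_comm]
  have hmid : (1 - Q * Qᵀ).det = (1 - Qᵀ * Q).det := by
    have : (1 + Q * (-Qᵀ)).det = (1 + (-Qᵀ) * Q).det :=
      Matrix.det_one_add_mul_comm Q (-Qᵀ)
    simpa [Matrix.mul_neg, Matrix.neg_mul, sub_eq_add_neg] using this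
  have hsq : P.det ^ 2 = S.det ^ 2 := by rw [hP2, hS2, hmid]
  calc |P.det| = Real.sqrt (P.det ^ 2) := (Real.sqrt_sq_eq_abs _).symm
    _ = Real.sqrt (S.det ^ 2) := by rw [hsq]
    _ = |S.det| := Real.sqrt_sq_eq_abs _
end
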